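/- Let E be a row-finite directed graph with vertex set E⁰ = V ∪ W where W is the set of sinks and V = E⁰ \ W, and let B : V × V → ℤ and C : V × W → ℤ record the number of edges between the respective vertices. Suppose g : E⁰ → ℝ≥0 satisfies g(v) = Σ_{e ∈ s⁻¹(v)} g(r(e)) for every v ∈ V. Then the induced map f : ℤ^V ⊕ ℤ^W → ℝ given by f(x) = Σ_v x(v) g(v) vanishes on the image of the map (Bᵗ − I, Cᵗ) : ℤ^V → ℤ^V ⊕ ℤ^W, and hence descends to a well-defined group homomorphism on the cokernel of (Bᵗ − I, Cᵗ). -/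

import Mathlib

open Finsupp

section GraphK

/- A row-finite graph with sinks `W` and non-sinks `V`: every edge has source in `V`
(sinks emit nothing) and range in `V ⊕ W`; each vertex of `V` emits finitely many edges. -/
variable {V W E : Type} (s : E → V) (r : E → V ⊕ W) [∀ v : V, Fintype {e : E // s e = v}]

/-- The standard basis vector `δ_u` of `ℤ^V ⊕ ℤ^W`. -/
noncomputable def delta : V ⊕ W → (V →₀ ℤ) × (W →₀ ℤ) :=
  Sum.elim (fun v => (Finsupp.single v 1, 0)) (fun w => ((0 : V →₀ ℤ), Finsupp.single w 1))

/-- The map `(Bᵗ - I, Cᵗ) : ℤ^V → ℤ^V ⊕ ℤ^W`, sending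
`δ_v ↦ Σ_{e ∈ s⁻¹(v)} δ_{r e} - δ_v`, i.e. `δ_v ↦ (Bᵗδ_v - δ_v, Cᵗδ_v)` where
`B : V × V → ℤ` and `C : V × W → ℤ` count the edges between the respective vertices. -/
noncomputable def graphK : (V →₀ ℤ) →+ (V →₀ ℤ) × (W →₀ ℤ) :=
  Finsupp.liftAddHom (fun v => zmultiplesHom _
    ((∑ e : {e : E // s e = v}, delta (r e)) - delta (Sum.inl v)))

/-- The homomorphism `ℤ^V ⊕ ℤ^W → ℝ` induced by a function `g` on the vertices:
`(x, y) ↦ Σ_v x(v) g(v) + Σ_w y(w) g(w)`. -/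
noncomputable def inducedF (g : V ⊕ W → ℝ) : (V →₀ ℤ) × (W →₀ ℤ) → ℝ :=
  fun p => p.1.sum (fun v n => (n : ℝ) * g (Sum.inl v))
    + p.2.sum (fun w n => (n : ℝ) * g (Sum.inr w))

end GraphK

noncomputable def Fhom {V W : Type} (g : V ⊕ W → ℝ) : (V →₀ ℤ) × (W →₀ ℤ) →+ ℝ :=
  ((Finsupp.liftAddHom (fun v => (zmultiplesHom ℝ (g (Sum.inl v))))).comp
      (AddMonoidHom.fst _ _)) +
  ((Finsupp.liftAddHom (fun w => (zmultiplesHom ℝ (g (Sum.inr w))))).comp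
      (AddMonoidHom.snd _ _))

lemma Fhom_eq {V W : Type} (g : V ⊕ W → ℝ) (p : (V →₀ ℤ) × (W →₀ ℤ)) :
    Fhom g p = inducedF g p := by
  simp [Fhom, inducedF, Finsupp.liftAddHom_apply, Finsupp.sum, zmultiplesHom_apply,
    zsmul_eq_mul]

lemma Fhom_delta {V W : Type} (g : V ⊕ W → ℝ) (u : V ⊕ W) : Fhom g (delta u) = g u := by
  cases u <;> simp [Fhom, delta]

/-- if `g : E⁰ → ℝ≥0` satisfies the graph-trace identity
`g(v) = Σ_{e ∈ s⁻¹(v)} g(r e)` at every non-sink `v`, then the induced map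
`f(x) = Σ_v x(v) g(v)` vanishes on the image of `(Bᵗ - I, Cᵗ) : ℤ^V → ℤ^V ⊕ ℤ^W`
and descends to a group homomorphism on the cokernel. -/
theorem stmt2 (V W E : Type) [Countable V] [Countable W] [Countable E]
    (s : E → V) (r : E → V ⊕ W) [∀ v : V, Fintype {e : E // s e = v}]
    (g : V ⊕ W → ℝ) (hg0 : ∀ u, 0 ≤ g u)
    (htrace : ∀ v : V, g (Sum.inl v) = ∑ e : {e : E // s e = v}, g (r e)) :
    (∀ x : V →₀ ℤ, inducedF g (graphK s r x) = 0) ∧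
    ∃ fbar : ((V →₀ ℤ) × (W →₀ ℤ)) ⧸ (graphK s r).range →+ ℝ,
      ∀ p : (V →₀ ℤ) × (W →₀ ℤ), fbar (QuotientAddGroup.mk p) = inducedF g p := by
  have key : ∀ x : V →₀ ℤ, Fhom g (graphK s r x) = 0 := by
    intro x
    induction x using Finsupp.induction_linear with
    | zero => simp
    | add a b ha hb => simp [map_add, ha, hb]
    | single v n =>
      simp only [graphK, Finsupp.liftAddHom_apply_single, zmultiplesHom_apply]
      rw [map_zsmul]
      have : Fhom g ((∑ e : {e : E // s e = v}, delta (r e)) - delta (Sum.inl v)) = 0 := by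
        rw [map_sub, map_sum]
        simp [Fhom_delta, htrace v]
      simp [this]
  have key' : ∀ x : V →₀ ℤ, inducedF g (graphK s r x) = 0 := fun x => by
    rw [← Fhom_eq]; exact key x
  refine ⟨key', ⟨QuotientAddGroup.lift _ (Fhom g) ?_, fun p => ?_⟩⟩
  · rintro _ ⟨x, rfl⟩; exact key x
  · simpa using Fhom_eq g p
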